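/- Let p, q, x, y be four distinct points in a finite point set P in general position in the plane. If the closed segments [p,x] and [q,y] do not cross (their relative interiors are disjoint), then there exists a pq-brush containing both edges {p,x} and {q,y}: a non-crossing spanning tree of P all of whose edges are incident to p or to q, containing the edge {p,q}, the edge {p,x}, and the edge {q,y}. -/

import Mathlib

/-- Two segments (given by their endpoints) cross if their relative interiors
(open segments) meet. -/
def Cross (a b c d : ℝ × ℝ) : Prop :=
  (openSegment ℝ a b ∩ openSegment ℝ c d).Nonempty

/-- A finite point set is in general position if no three of its points are collinear. -/
def GenPos (P : Finset (ℝ × ℝ)) : Prop :=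
  ∀ a ∈ P, ∀ b ∈ P, ∀ c ∈ P, a ≠ b → a ≠ c → b ≠ c →
    ¬ Collinear ℝ ({a, b, c} : Set (ℝ × ℝ))

/-- A geometric graph on the point set `P` is non-crossing if no two distinct edges cross. -/
def NonCrossing {P : Finset (ℝ × ℝ)} (T : SimpleGraph P) : Prop :=
  ∀ a b c d : P, T.Adj a b → T.Adj c d → s(a, b) ≠ s(c, d) →
    ¬ Cross (a : ℝ × ℝ) b c d

private lemma collinear_of_mem_openSegment {u a b : ℝ × ℝ}
    (h : u ∈ openSegment ℝ a b) : Collinear ℝ ({u, a, b} : Set (ℝ × ℝ)) := by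
  obtain ⟨t1, t2, ht1, ht2, hsum, hu⟩ := openSegment_subset_segment ℝ a b h
  have ha : a ∈ ({u, a, b} : Set (ℝ × ℝ)) := by simp
  rw [collinear_iff_of_mem ha]
  refine ⟨b - a, fun w hw => ?_⟩
  have h1 : t1 = 1 - t2 := by linarith
  subst h1
  simp only [Set.mem_insert_iff, Set.mem_singleton_iff] at hw
  rcases hw with rfl | rfl | rfl
  · exact ⟨t2, by rw [← hu]; simp only [vadd_eq_add]; module⟩
  · exact ⟨0, by simp⟩
  · exact ⟨1, by simp only [vadd_eq_add]; module⟩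

private lemma collinear_of_cross {o a b : ℝ × ℝ} (h : Cross o a o b) :
    Collinear ℝ ({o, a, b} : Set (ℝ × ℝ)) := by
  obtain ⟨u, hu1, hu2⟩ := h
  rw [openSegment_eq_image] at hu1 hu2
  obtain ⟨t1, ht1, hu1⟩ := hu1
  obtain ⟨t2, ht2, hu2⟩ := hu2
  have e1 : u - o = t1 • (a - o) := by rw [← hu1]; module
  have e2 : u - o = t2 • (b - o) := by rw [← hu2]; module
  have ho : o ∈ ({o, a, b} : Set (ℝ × ℝ)) := by simp
  rw [collinear_iff_of_mem ho]
  refine ⟨a - o, fun w hw => ?_⟩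
  simp only [Set.mem_insert_iff, Set.mem_singleton_iff] at hw
  rcases hw with rfl | rfl | rfl
  · exact ⟨0, by simp⟩
  · exact ⟨1, by simp only [vadd_eq_add]; module⟩
  · refine ⟨t2⁻¹ * t1, ?_⟩
    have ht2' : (t2 : ℝ) ≠ 0 := ne_of_gt ht2.1
    have h3 : t1 • (a - o) = t2 • (w - o) := e1.symm.trans e2
    have h4 : (t2⁻¹ * t1) • (a - o) = w - o := by
      rw [mul_smul, h3, smul_smul, inv_mul_cancel₀ ht2', one_smul]
    rw [vadd_eq_add, h4]
    module

private lemma cross_swap_left {a b c d : ℝ × ℝ} (h : Cross a b c d) : Cross b a c d := by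
  unfold Cross at *
  rwa [openSegment_symm ℝ b a]

private lemma cross_swap_right {a b c d : ℝ × ℝ} (h : Cross a b c d) : Cross a b d c := by
  unfold Cross at *
  rwa [openSegment_symm ℝ d c]

private lemma cross_comm {a b c d : ℝ × ℝ} (h : Cross a b c d) : Cross c d a b := by
  unfold Cross at *
  rwa [Set.inter_comm]

private lemma reach_inv {V : Type*} {H : SimpleGraph V} {g : V → Prop}
    (hg : ∀ a b, H.Adj a b → (g a ↔ g b)) {u v : V} (h : H.Reachable u v) : g u ↔ g v := by
  obtain ⟨w⟩ := h
  induction w with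
  | nil => exact Iff.rfl
  | cons hadj _ ih => exact (hg _ _ hadj).trans ih

theorem stmt_13 (P : Finset (ℝ × ℝ)) (hgen : GenPos P)
    (p q x y : ℝ × ℝ) (hp : p ∈ P) (hq : q ∈ P) (hx : x ∈ P) (hy : y ∈ P)
    (hd : [p, q, x, y].Pairwise (· ≠ ·))
    (hnc : ¬ Cross p x q y) :
    ∃ T : SimpleGraph P, T.IsTree ∧ NonCrossing T ∧
      T.Adj ⟨p, hp⟩ ⟨q, hq⟩ ∧ T.Adj ⟨p, hp⟩ ⟨x, hx⟩ ∧ T.Adj ⟨q, hq⟩ ⟨y, hy⟩ ∧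
      ∀ a b : P, T.Adj a b → (a : ℝ × ℝ) = p ∨ (a : ℝ × ℝ) = q ∨
        (b : ℝ × ℝ) = p ∨ (b : ℝ × ℝ) = q := by
  classical
  simp only [List.pairwise_cons, List.mem_cons, List.not_mem_nil, List.mem_singleton,
    forall_eq_or_imp, forall_eq] at hd
  obtain ⟨⟨hpq, hpx, hpy, -⟩, ⟨hqx, hqy, -⟩, ⟨hxy, -⟩, -⟩ := hd
  have hcol : ∀ a ∈ P, ∀ b ∈ P, ∀ c ∈ P, a ≠ b → a ≠ c → b ≠ c →
      a ∈ openSegment ℝ b c → False := fun a ha b hb c hc hab hac hbc hmem =>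
    hgen a ha b hb c hc hab hac hbc (collinear_of_mem_openSegment hmem)
  have segdisj : Disjoint (segment ℝ p x) (segment ℝ q y) := by
    rw [Set.disjoint_left]
    intro u hu hv
    rw [← insert_endpoints_openSegment] at hu hv
    rcases hu with h | h | hu
    · rcases hv with h' | h' | h'
      · exact hpq (h.symm.trans h')
      · exact hpy (h.symm.trans h')
      · exact hcol p hp q hq y hy hpq hpy hqy (h ▸ h')
    · rcases hv with h' | h' | h'
      · exact hqx (h'.symm.trans h)
      · exact hxy (h.symm.trans h')
      · exact hcol x hx q hq y hy (Ne.symm hqx) hxy hqy (h ▸ h')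
    · rcases hv with h' | h' | hv
      · exact hcol q hq p hp x hx (Ne.symm hpq) hqx hpx (h' ▸ hu)
      · exact hcol y hy p hp x hx (Ne.symm hpy) (Ne.symm hxy) hpx (h' ▸ hu)
      · exact hnc ⟨u, hu, hv⟩
  have hcompact : IsCompact (segment ℝ p x) := by
    rw [segment_eq_image]
    exact isCompact_Icc.image (by fun_prop)
  have hcompact' : IsCompact (segment ℝ q y) := by
    rw [segment_eq_image]
    exact isCompact_Icc.image (by fun_prop)
  obtain ⟨f, u0, v0, hfu, huv, hfv⟩ :=
    geometric_hahn_banach_compact_closed (convex_segment p x) hcompact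
      (convex_segment q y) hcompact'.isClosed segdisj
  set c : ℝ := (u0 + v0) / 2 with hc
  have hlt : ∀ a ∈ segment ℝ p x, f a < c := fun a ha => by
    have := hfu a ha; simp only [hc]; linarith
  have hgt : ∀ b ∈ segment ℝ q y, c < f b := fun b hb => by
    have := hfv b hb; simp only [hc]; linarith
  have hfp : f p < c := hlt p (left_mem_segment ℝ p x)
  have hfx : f x < c := hlt x (right_mem_segment ℝ p x)
  have hfq : c < f q := hgt q (left_mem_segment ℝ q y)
  have hfy : c < f y := hgt y (right_mem_segment ℝ q y)
  have hflin : IsLinearMap ℝ f := ⟨f.map_add, f.map_smul⟩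
  set pv : P := ⟨p, hp⟩ with hpv
  set qv : P := ⟨q, hq⟩ with hqv
  have hpvqv : pv ≠ qv := fun h => hpq (congrArg Subtype.val h)
  set par : P → P := fun z =>
    if (z : ℝ × ℝ) = q then qv else if (z : ℝ × ℝ) = p then qv
      else if f (z : ℝ × ℝ) < c then pv else qv with hpar
  have hparq : par qv = qv := by simp [hpar, hqv]
  have hparp : par pv = qv := by simp [hpar, hpv, hpq]
  have hparx : par ⟨x, hx⟩ = pv := by
    simp [hpar, Ne.symm hqx, Ne.symm hpx, hfx]
  have hpary : par ⟨y, hy⟩ = qv := by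
    simp [hpar, Ne.symm hpy, not_lt.mpr hfy.le]
  have hmem : ∀ z, par z = pv ∨ par z = qv := by
    intro z
    simp only [hpar]
    split_ifs <;> simp
  have hsidep : ∀ z, par z = pv →
      (z : ℝ × ℝ) ≠ q ∧ (z : ℝ × ℝ) ≠ p ∧ f (z : ℝ × ℝ) < c := by
    intro z hz
    simp only [hpar] at hz
    split_ifs at hz with h1 h2 h3
    · exact absurd hz.symm hpvqv
    · exact absurd hz.symm hpvqv
    · exact ⟨h1, h2, h3⟩
    · exact absurd hz.symm hpvqv
  have hsideq : ∀ z, z ≠ qv → par z = qv →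
      z = pv ∨ ((z : ℝ × ℝ) ≠ q ∧ (z : ℝ × ℝ) ≠ p ∧ c ≤ f (z : ℝ × ℝ)) := by
    intro z hzq hz
    simp only [hpar] at hz
    split_ifs at hz with h1 h2 h3
    · exact absurd (Subtype.ext h1) hzq
    · exact Or.inl (Subtype.ext h2)
    · exact absurd hz hpvqv
    · exact Or.inr ⟨h1, h2, not_lt.mp h3⟩
  have hparne : ∀ z, z ≠ qv → par z ≠ z := by
    intro z hz
    rcases hmem z with h | h
    · rw [h]
      exact fun h' => (hsidep z h).2.1 (congrArg Subtype.val h'.symm)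
    · rw [h]
      exact fun h' => hz h'.symm
  set T : SimpleGraph P :=
    { Adj := fun a b => a ≠ b ∧ (par a = b ∨ par b = a)
      symm := ⟨fun a b h => ⟨h.1.symm, h.2.symm⟩⟩
      loopless := ⟨fun a h => h.1 rfl⟩ } with hT
  have hroot : ∀ (u v : P), u ≠ v → par u = v → u ≠ qv := by
    intro u v huv hu e
    rw [e, hparq] at hu
    exact huv (e.trans hu)
  -- half-plane containment
  have hhp_lt : ∀ (a b : ℝ × ℝ), f a < c → f b < c →
      ∀ u ∈ openSegment ℝ a b, f u < c := by
    intro a b ha hb u hu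
    exact (convex_halfSpace_lt hflin c).segment_subset ha hb
      (openSegment_subset_segment ℝ a b hu)
  have hhp_ge : ∀ (a b : ℝ × ℝ), c ≤ f a → c ≤ f b →
      ∀ u ∈ openSegment ℝ a b, c ≤ f u := by
    intro a b ha hb u hu
    exact (convex_halfSpace_ge hflin c).segment_subset ha hb
      (openSegment_subset_segment ℝ a b hu)
  -- the mixed case: a p-edge cannot cross a q-edge
  have hmix : ∀ z w : P, par z = pv → w ≠ qv → par w = qv →
      s(z, par z) ≠ s(w, par w) → ¬ Cross (z : ℝ × ℝ) (par z : ℝ × ℝ) (w : ℝ × ℝ) (par w : ℝ × ℝ) := by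
    intro z w hz hwq hw hne hcr
    rw [hz, hw] at hcr
    obtain ⟨hzq', hzp', hzlt⟩ := hsidep z hz
    rcases hsideq w hwq hw with rfl | ⟨hwq', hwp', hwge⟩
    · -- w = pv : the other edge is the segment [p, q]; shared endpoint p
      have hcr' : Cross (pv : ℝ × ℝ) (z : ℝ × ℝ) (pv : ℝ × ℝ) (qv : ℝ × ℝ) :=
        cross_swap_left hcr
      exact hgen p hp (z : ℝ × ℝ) z.2 q hq (Ne.symm hzp') hpq hzq'
        (collinear_of_cross hcr')
    · -- w is a leaf on q's side: separated by the line f = c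
      obtain ⟨u, hu1, hu2⟩ := hcr
      have h1 : f u < c := hhp_lt _ _ hzlt hfp u hu1
      have h2 : c ≤ f u := hhp_ge _ _ hwge hfq.le u hu2
      linarith
  have hedge : ∀ z w : P, z ≠ qv → w ≠ qv → s(z, par z) ≠ s(w, par w) →
      ¬ Cross (z : ℝ × ℝ) (par z : ℝ × ℝ) (w : ℝ × ℝ) (par w : ℝ × ℝ) := by
    intro z w hzq hwq hne hcr
    rcases hmem z with hz | hz <;> rcases hmem w with hw | hw
    · -- both p-edges
      obtain ⟨hzq', hzp', -⟩ := hsidep z hz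
      obtain ⟨hwq', hwp', -⟩ := hsidep w hw
      have hzw : z ≠ w := fun e => hne (by rw [e])
      rw [hz, hw] at hcr
      have hcr' : Cross (pv : ℝ × ℝ) (z : ℝ × ℝ) (pv : ℝ × ℝ) (w : ℝ × ℝ) :=
        cross_swap_right (cross_swap_left hcr)
      exact hgen p hp (z : ℝ × ℝ) z.2 (w : ℝ × ℝ) w.2 (Ne.symm hzp') (Ne.symm hwp')
        (fun e => hzw (Subtype.ext e)) (collinear_of_cross hcr')
    · exact hmix z w hz hwq hw hne hcr
    · exact hmix w z hw hzq hz (Ne.symm hne) (cross_comm hcr)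
    · -- both q-edges
      rw [hz, hw] at hcr
      rcases hsideq z hzq hz with rfl | ⟨hzq', hzp', -⟩
      · rcases hsideq w hwq hw with rfl | ⟨hwq', hwp', -⟩
        · exact hne rfl
        · have hcr' : Cross (qv : ℝ × ℝ) (pv : ℝ × ℝ) (qv : ℝ × ℝ) (w : ℝ × ℝ) :=
            cross_swap_right (cross_swap_left hcr)
          exact hgen q hq p hp (w : ℝ × ℝ) w.2 (Ne.symm hpq) (Ne.symm hwq') (Ne.symm hwp')
            (collinear_of_cross hcr')
      · rcases hsideq w hwq hw with rfl | ⟨hwq', hwp', -⟩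
        · have hcr' : Cross (qv : ℝ × ℝ) (z : ℝ × ℝ) (qv : ℝ × ℝ) (pv : ℝ × ℝ) :=
            cross_swap_right (cross_swap_left hcr)
          exact hgen q hq (z : ℝ × ℝ) z.2 p hp (Ne.symm hzq') (Ne.symm hpq) hzp'
            (collinear_of_cross hcr')
        · have hzw : z ≠ w := fun e => hne (by rw [e])
          have hcr' : Cross (qv : ℝ × ℝ) (z : ℝ × ℝ) (qv : ℝ × ℝ) (w : ℝ × ℝ) :=
            cross_swap_right (cross_swap_left hcr)
          exact hgen q hq (z : ℝ × ℝ) z.2 (w : ℝ × ℝ) w.2 (Ne.symm hzq') (Ne.symm hwq')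
            (fun e => hzw (Subtype.ext e)) (collinear_of_cross hcr')
  have hncT : NonCrossing T := by
    intro a b a' b' hab hab' hne hcr
    obtain ⟨hne1, h1⟩ := hab
    obtain ⟨hne2, h2⟩ := hab'
    rcases h1 with h1 | h1 <;> rcases h2 with h2 | h2
    · exact hedge a a' (hroot a b hne1 h1) (hroot a' b' hne2 h2)
        (by rw [h1, h2]; exact hne) (by rw [h1, h2]; exact hcr)
    · exact hedge a b' (hroot a b hne1 h1) (hroot b' a' hne2.symm h2)
        (by rw [h1, h2]; exact fun e => hne (e.trans Sym2.eq_swap))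
        (by rw [h1, h2]; exact cross_swap_right hcr)
    · exact hedge b a' (hroot b a hne1.symm h1) (hroot a' b' hne2 h2)
        (by rw [h1, h2]; exact fun e => hne (Sym2.eq_swap.trans e))
        (by rw [h1, h2]; exact cross_swap_left hcr)
    · exact hedge b b' (hroot b a hne1.symm h1) (hroot b' a' hne2.symm h2)
        (by rw [h1, h2]; exact fun e => hne (Sym2.eq_swap.trans (e.trans Sym2.eq_swap)))
        (by rw [h1, h2]; exact cross_swap_right (cross_swap_left hcr))
  have hadjpar : ∀ z : P, z ≠ qv → T.Adj z (par z) :=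
    fun z hz => ⟨(hparne z hz).symm, Or.inl rfl⟩
  have hTpq : T.Adj pv qv := ⟨hpvqv, Or.inl hparp⟩
  have hreach : ∀ z : P, T.Reachable z qv := by
    intro z
    by_cases hz : z = qv
    · subst hz
      exact SimpleGraph.Reachable.refl _
    · have h1 := (hadjpar z hz).reachable
      rcases hmem z with h | h
      · rw [h] at h1
        exact h1.trans hTpq.reachable
      · rwa [h] at h1
  have hconn : T.Connected := by
    rw [SimpleGraph.connected_iff]
    exact ⟨fun u v => (hreach u).trans (hreach v).symm, ⟨qv⟩⟩
  have core : ∀ z : P, z ≠ qv →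
      ¬ (T \ SimpleGraph.fromEdgeSet {s(z, par z)}).Reachable z (par z) := by
    intro z hz hreach'
    by_cases hzp : z = pv
    · subst hzp
      rw [hparp] at hreach'
      have hinv : ∀ a b : P, (T \ SimpleGraph.fromEdgeSet {s(pv, qv)}).Adj a b →
          ((a = pv ∨ par a = pv) ↔ (b = pv ∨ par b = pv)) := by
        intro a b hab
        rw [SimpleGraph.sdiff_adj, SimpleGraph.fromEdgeSet_adj] at hab
        obtain ⟨⟨hne1, hor⟩, hno⟩ := hab
        have hnoe : s(a, b) ≠ s(pv, qv) := fun e => hno ⟨by simp [e], hne1⟩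
        have step : ∀ u v : P, par u = v → s(u, v) ≠ s(pv, qv) →
            ((u = pv ∨ par u = pv) ↔ (v = pv ∨ par v = pv)) := by
          intro u v hu hne'
          rcases hmem u with h | h
          · rw [hu] at h
            simp [h, hu ▸ h]
          · have hv : v = qv := by rw [← hu, h]
            have hup : u ≠ pv := by
              rintro rfl
              exact hne' (by rw [hv])
            have h1 : par u ≠ pv := by rw [h]; exact Ne.symm hpvqv
            have h2 : v ≠ pv := by rw [hv]; exact Ne.symm hpvqv
            have h3 : par v ≠ pv := by rw [hv, hparq]; exact Ne.symm hpvqv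
            simp [hup, h1, h2, h3]
        rcases hor with h | h
        · exact step a b h hnoe
        · exact (step b a h (fun e => hnoe (Sym2.eq_swap.trans e))).symm
      have hiff := reach_inv hinv hreach'
      rcases hiff.mp (Or.inl rfl) with h | h
      · exact hpvqv h.symm
      · rw [hparq] at h
        exact hpvqv h.symm
    · have hinv : ∀ a b : P, (T \ SimpleGraph.fromEdgeSet {s(z, par z)}).Adj a b →
          ((a = z) ↔ (b = z)) := by
        intro a b hab
        rw [SimpleGraph.sdiff_adj, SimpleGraph.fromEdgeSet_adj] at hab
        obtain ⟨⟨hne1, hor⟩, hno⟩ := hab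
        have hnoe : s(a, b) ≠ s(z, par z) := fun e => hno ⟨by simp [e], hne1⟩
        have haz : a ≠ z := by
          rintro rfl
          rcases hor with h | h
          · exact hnoe (by rw [h])
          · rcases hmem b with h' | h'
            · rw [h] at h'
              exact hzp h'
            · rw [h] at h'
              exact hz h'
        have hbz : b ≠ z := by
          rintro rfl
          rcases hor with h | h
          · rcases hmem a with h' | h'
            · rw [h] at h'
              exact hzp h'
            · rw [h] at h'
              exact hz h'
          · exact hnoe (by rw [← h, Sym2.eq_swap])
        simp [haz, hbz]
      have hiff := reach_inv hinv hreach'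
      exact hparne z hz (hiff.mp rfl)
  have hacyc : T.IsAcyclic := by
    rw [SimpleGraph.isAcyclic_iff_forall_adj_isBridge]
    intro v w hvw
    rw [SimpleGraph.isBridge_iff]
    obtain ⟨hne1, hor⟩ := hvw
    rcases hor with h | h
    · rw [← h]
      exact core v (hroot v w hne1 h)
    · intro hr
      refine core w (hroot w v hne1.symm h) ?_
      rw [h, Sym2.eq_swap]
      exact hr.symm
  refine ⟨T, ⟨hconn, hacyc⟩, hncT, hTpq, ?_, ?_, ?_⟩
  · exact ⟨fun e => hpx (congrArg Subtype.val e), Or.inr hparx⟩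
  · exact ⟨fun e => hqy (congrArg Subtype.val e), Or.inr hpary⟩
  · intro a b hab
    obtain ⟨-, hor⟩ := hab
    rcases hor with h | h
    · rcases hmem a with h' | h' <;> rw [h'] at h
      · exact Or.inr (Or.inr (Or.inl (congrArg Subtype.val h.symm)))
      · exact Or.inr (Or.inr (Or.inr (congrArg Subtype.val h.symm)))
    · rcases hmem b with h' | h' <;> rw [h'] at h
      · exact Or.inl (congrArg Subtype.val h.symm)
      · exact Or.inr (Or.inl (congrArg Subtype.val h.symm))
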